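/- Assume χ > χ_N = 1 + 1/N. Then for any solution X of the discrete Keller–Segel particle system, defined on its maximal interval of existence [0,T): (i) |X_i(t)| ≤ √(∑_{j=1}^N X_j(0)²) for every index i and every t ∈ [0,T); (ii) T is finite, with T ≤ (∑_j X_j(0)²)/(2(N−1)(χ h_N N − 1)); (iii) there exists an index i ∈ {1,…,N−1} such that liminf_{t→T⁻}(X_{i+1}(t)−X_i(t)) = 0; in particular a weak blow-up set exists. -/

import Mathlib

open Filter

noncomputable section

/-- `h_N = 1/(N+1)`. -/
def hN (N : ℕ) : ℝ := 1 / (N + 1)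

/-- Right-hand side of the discrete Keller–Segel particle ODE, with the convention that
the boundary terms `1/(X_1 - X_0)` and `1/(X_{N+1} - X_N)` are set to zero. -/
def ksRHS (N : ℕ) (χ : ℝ) (x : ℕ → ℝ) (i : ℕ) : ℝ :=
  (if i < N then -(1 / (x (i + 1) - x i)) else 0)
    + (if 1 < i then 1 / (x i - x (i - 1)) else 0)
    + 2 * χ * hN N * ∑ j ∈ (Finset.Icc 1 N).erase i, 1 / (x j - x i)

/-- A solution of the discrete Keller–Segel particle system on `[0,T)`. -/
structure IsKSSol (N : ℕ) (χ T : ℝ) (X : ℕ → ℝ → ℝ) : Prop where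
  ordered : ∀ t ∈ Set.Ico (0 : ℝ) T, ∀ i, 1 ≤ i → i < N → X i t < X (i + 1) t
  ode : ∀ i ∈ Finset.Icc 1 N, ∀ t ∈ Set.Ico (0 : ℝ) T,
    HasDerivAt (X i) (ksRHS N χ (fun j => X j t) i) t

/-- A solution on its maximal interval of existence `[0,T)`: it cannot be extended to a
solution on any larger interval `[0,T')`. -/
def IsMaxKSSol (N : ℕ) (χ T : ℝ) (X : ℕ → ℝ → ℝ) : Prop :=
  IsKSSol N χ T X ∧
    ∀ T' > T, ∀ X' : ℕ → ℝ → ℝ,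
      (∀ i ∈ Finset.Icc 1 N, ∀ t ∈ Set.Ico (0 : ℝ) T, X' i t = X i t) →
        ¬ IsKSSol N χ T' X'

/-- `liminf_{t → T⁻} (X_{i+1}(t) - X_i(t)) = 0`. -/
def gapLiminfZero (X : ℕ → ℝ → ℝ) (T : ℝ) (i : ℕ) : Prop :=
  Filter.liminf (fun t => X (i + 1) t - X i t) (nhdsWithin T (Set.Iio T)) = 0

/-- A nonempty set of consecutive indices in `{1,…,N}` all of whose consecutive gaps have
liminf zero at time `T`. -/
def IsWeakCand (N : ℕ) (X : ℕ → ℝ → ℝ) (T : ℝ) (I : Finset ℕ) : Prop :=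
  I.Nonempty ∧ (∃ a b, 1 ≤ a ∧ b ≤ N ∧ I = Finset.Icc a b) ∧
    ∀ i, i ∈ I → i + 1 ∈ I → gapLiminfZero X T i

/-- A weak blow-up set: maximal for inclusion among weak candidates. -/
def IsWeakBlowup (N : ℕ) (X : ℕ → ℝ → ℝ) (T : ℝ) (I : Finset ℕ) : Prop :=
  IsWeakCand N X T I ∧ ∀ J, IsWeakCand N X T J → I ⊆ J → J = I

/-- A strong blow-up set: all consecutive gaps tend to zero, and the particles of `I` stay
uniformly away from the particles outside `I`. -/
def IsStrongBlowup (N : ℕ) (X : ℕ → ℝ → ℝ) (T : ℝ) (I : Finset ℕ) : Prop :=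
  IsWeakBlowup N X T I ∧
    (∀ i, i ∈ I → i + 1 ∈ I →
      Filter.Tendsto (fun t => X (i + 1) t - X i t) (nhdsWithin T (Set.Iio T)) (nhds 0)) ∧
    ∃ c > 0, ∀ i ∈ I, ∀ j ∈ Finset.Icc 1 N, j ∉ I → ∀ t ∈ Set.Ico (0 : ℝ) T,
      1 / c ≤ |X i t - X j t|

/-- Mean of the configuration `x` over the index set `I`. -/
def meanOn (I : Finset ℕ) (x : ℕ → ℝ) : ℝ := (∑ i ∈ I, x i) / (I.card : ℝ)

/-- Variance `Π²_I` of the configuration `x` over the index set `I`. -/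
def var2 (I : Finset ℕ) (x : ℕ → ℝ) : ℝ := ∑ i ∈ I, (x i - meanOn I x) ^ 2

/-- Exterior interaction potential `H_{IO,m} = ∑_{j∈O} ∑_{i∈I} 1/(x_j - x_i)^m`,
where `O = {1,…,N} \ I`. -/
def extPot (N : ℕ) (I : Finset ℕ) (m : ℕ) (x : ℕ → ℝ) : ℝ :=
  ∑ j ∈ (Finset.Icc 1 N) \ I, ∑ i ∈ I, 1 / (x j - x i) ^ m

lemma ksRHS_congr (N : ℕ) (χ : ℝ) {x y : ℕ → ℝ}
    (h : ∀ j ∈ Finset.Icc 1 N, x j = y j) {i : ℕ} (hi : i ∈ Finset.Icc 1 N) :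
    ksRHS N χ x i = ksRHS N χ y i := by
  simp only [Finset.mem_Icc] at hi h
  unfold ksRHS
  congr 1
  · congr 1
    · split_ifs with h1
      · rw [h (i+1) ⟨by omega, by omega⟩, h i ⟨hi.1, hi.2⟩]
      · rfl
    · split_ifs with h1
      · rw [h (i-1) ⟨by omega, by omega⟩, h i ⟨hi.1, hi.2⟩]
      · rfl
  · congr 1
    apply Finset.sum_congr rfl
    intro j hj
    rw [Finset.mem_erase, Finset.mem_Icc] at hj
    rw [h j ⟨hj.2.1, hj.2.2⟩, h i ⟨hi.1, hi.2⟩]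

/-- key algebraic identity: `∑ x_i ksRHS_i = (N-1)(1 - χ h_N N)` for ordered configs. -/
lemma sum_mul_ksRHS (N : ℕ) (hN2 : 2 ≤ N) (χ : ℝ) (x : ℕ → ℝ)
    (hx : ∀ i, 1 ≤ i → i < N → x i < x (i + 1)) :
    ∑ i ∈ Finset.Icc 1 N, x i * ksRHS N χ x i
      = ((N : ℝ) - 1) * (1 - χ * hN N * N) := by
  have hlt : ∀ i j, 1 ≤ i → i < j → j ≤ N → x i < x j := by
    intro i j hi hij hj
    induction j with
    | zero => omega
    | succ k ih =>
      rcases Nat.lt_or_ge i k with hik | hik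
      · exact lt_trans (ih (by omega) (by omega)) (hx k (by omega) (by omega))
      · have : i = k := by omega
        subst this
        exact hx i hi (by omega)
  -- rewrite the sum
  have expand : ∀ i ∈ Finset.Icc 1 N,
      x i * ksRHS N χ x i
        = (if i < N then -(x i / (x (i + 1) - x i)) else 0)
          + (if 1 < i then x i / (x i - x (i - 1)) else 0)
          + 2 * χ * hN N * ∑ j ∈ (Finset.Icc 1 N).erase i, x i / (x j - x i) := by
    intro i hi
    unfold ksRHS
    rw [Finset.mul_sum, mul_add, mul_add]
    congr 1
    · congr 1
      · split_ifs <;> ring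
      · split_ifs <;> ring
    · rw [Finset.mul_sum, Finset.mul_sum]
      ring_nf
  rw [Finset.sum_congr rfl expand]
  rw [Finset.sum_add_distrib, Finset.sum_add_distrib]
  have hne : ∀ i j, i ∈ Finset.Icc 1 N → j ∈ Finset.Icc 1 N → i ≠ j → x i ≠ x j := by
    intro i j hi hj hij
    simp only [Finset.mem_Icc] at hi hj
    rcases Nat.lt_or_ge i j with h | h
    · exact ne_of_lt (hlt i j hi.1 h hj.2)
    · exact (ne_of_lt (hlt j i hj.1 (by omega) hi.2)).symm
  -- first two sums telescope
  have hS1 : ∑ i ∈ Finset.Icc 1 N, (if i < N then -(x i / (x (i + 1) - x i)) else 0)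
      = ∑ i ∈ Finset.Icc 1 (N-1), -(x i / (x (i + 1) - x i)) := by
    rw [← Finset.sum_subset (Finset.Icc_subset_Icc_right (by omega : N - 1 ≤ N))]
    · apply Finset.sum_congr rfl
      intro i hi
      simp only [Finset.mem_Icc] at hi
      rw [if_pos (by omega)]
    · intro i hi hni
      simp only [Finset.mem_Icc] at hi hni
      rw [if_neg (by omega)]
  have hS2 : ∑ i ∈ Finset.Icc 1 N, (if 1 < i then x i / (x i - x (i - 1)) else 0)
      = ∑ i ∈ Finset.Icc 1 (N-1), x (i+1) / (x (i + 1) - x i) := by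
    have himg : Finset.Icc 2 N = Finset.image (· + 1) (Finset.Icc 1 (N-1)) := by
      rw [Finset.image_add_right_Icc]
      congr 1
      omega
    have : ∑ i ∈ Finset.Icc 1 N, (if 1 < i then x i / (x i - x (i - 1)) else 0)
        = ∑ i ∈ Finset.Icc 2 N, x i / (x i - x (i - 1)) := by
      rw [← Finset.sum_subset (Finset.Icc_subset_Icc_left (by omega : 1 ≤ 2))]
      · apply Finset.sum_congr rfl
        intro i hi
        simp only [Finset.mem_Icc] at hi
        rw [if_pos (by omega)]
      · intro i hi hni
        simp only [Finset.mem_Icc] at hi hni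
        rw [if_neg (by omega)]
    rw [this, himg, Finset.sum_image (by intro a _ b _ h; simp only at h; omega)]
    apply Finset.sum_congr rfl
    intro i hi
    simp
  have htel : ∑ i ∈ Finset.Icc 1 N, (if i < N then -(x i / (x (i + 1) - x i)) else 0)
      + ∑ i ∈ Finset.Icc 1 N, (if 1 < i then x i / (x i - x (i - 1)) else 0)
      = (N : ℝ) - 1 := by
    rw [hS1, hS2, ← Finset.sum_add_distrib]
    have : ∀ i ∈ Finset.Icc 1 (N-1),
        -(x i / (x (i + 1) - x i)) + x (i+1) / (x (i + 1) - x i) = 1 := by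
      intro i hi
      simp only [Finset.mem_Icc] at hi
      have hg : x (i+1) - x i ≠ 0 := by
        have := hx i hi.1 (by omega)
        linarith
      field_simp
      ring
    rw [Finset.sum_congr rfl this, Finset.sum_const, Nat.card_Icc]
    have h' : N - 1 + 1 - 1 = N - 1 := by omega
    rw [h', nsmul_eq_mul, mul_one, Nat.cast_sub (by omega : 1 ≤ N), Nat.cast_one]
  -- interaction sum
  have herase : ∀ i ∈ Finset.Icc 1 N,
      ∑ j ∈ (Finset.Icc 1 N).erase i, x i / (x j - x i)
        = ∑ j ∈ Finset.Icc 1 N, x i / (x j - x i) := by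
    intro i hi
    rw [Finset.sum_erase_eq_sub hi]
    simp
  have hAA : (∑ i ∈ Finset.Icc 1 N, ∑ j ∈ Finset.Icc 1 N, x i / (x j - x i))
      + (∑ i ∈ Finset.Icc 1 N, ∑ j ∈ Finset.Icc 1 N, x i / (x j - x i))
      = -((N:ℝ)^2 - N) := by
    nth_rewrite 2 [Finset.sum_comm]
    rw [← Finset.sum_add_distrib]
    have : ∀ j ∈ Finset.Icc 1 N,
        (∑ i ∈ Finset.Icc 1 N, x j / (x i - x j)) + ∑ i ∈ Finset.Icc 1 N, x i / (x j - x i)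
          = ∑ i ∈ Finset.Icc 1 N, (if i = j then (0:ℝ) else -1) := by
      intro j hj
      rw [← Finset.sum_add_distrib]
      apply Finset.sum_congr rfl
      intro i hi
      by_cases hij : i = j
      · subst hij; simp
      · rw [if_neg hij]
        have hne' : x j - x i ≠ 0 := sub_ne_zero.mpr (hne j i hj hi (Ne.symm hij))
        have hne'' : x i - x j ≠ 0 := sub_ne_zero.mpr (hne i j hi hj hij)
        field_simp
        ring
    rw [Finset.sum_congr rfl this]
    have hin : ∀ j ∈ Finset.Icc 1 N,
        ∑ i ∈ Finset.Icc 1 N, (if i = j then (0:ℝ) else -1)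
          = -((N:ℝ) - 1) := by
      intro j hj
      have : ∀ i ∈ Finset.Icc 1 N, (if i = j then (0:ℝ) else -1)
          = (if i = j then (1:ℝ) else 0) - 1 := by
        intro i _
        split_ifs <;> norm_num
      rw [Finset.sum_congr rfl this, Finset.sum_sub_distrib, Finset.sum_ite_eq' (Finset.Icc 1 N) j (fun _ => (1:ℝ)), if_pos hj, Finset.sum_const, Nat.card_Icc]
      have : N + 1 - 1 = N := by omega
      rw [this]
      ring
    rw [Finset.sum_congr rfl hin, Finset.sum_const, Nat.card_Icc]
    have : N + 1 - 1 = N := by omega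
    rw [this]
    ring
  have hA : (∑ i ∈ Finset.Icc 1 N, ∑ j ∈ Finset.Icc 1 N, x i / (x j - x i))
      = -((N:ℝ)^2 - N) / 2 := by linarith
  have hS3 : ∑ i ∈ Finset.Icc 1 N,
      2 * χ * hN N * ∑ j ∈ (Finset.Icc 1 N).erase i, x i / (x j - x i)
      = 2 * χ * hN N * (-((N:ℝ)^2 - N) / 2) := by
    rw [← Finset.mul_sum]
    congr 1
    rw [Finset.sum_congr rfl herase, hA]
  rw [htel, hS3]
  ring

/-- Derivative of the second moment. -/
lemma hasDerivAt_secondMoment (N : ℕ) (hN2 : 2 ≤ N) (χ T : ℝ) (X : ℕ → ℝ → ℝ)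
    (hKS : IsKSSol N χ T X) {t : ℝ} (ht : t ∈ Set.Ico (0:ℝ) T) :
    HasDerivAt (fun s => ∑ j ∈ Finset.Icc 1 N, X j s ^ 2)
      (2 * (((N : ℝ) - 1) * (1 - χ * hN N * N))) t := by
  have h : HasDerivAt (fun s => ∑ j ∈ Finset.Icc 1 N, X j s ^ 2)
      (∑ j ∈ Finset.Icc 1 N, 2 * X j t * ksRHS N χ (fun k => X k t) j) t := by
    apply HasDerivAt.fun_sum
    intro j hj
    have := (hKS.ode j hj t ht)
    simpa [Function.comp_def, mul_comm, mul_assoc, mul_left_comm] using ((hasDerivAt_pow 2 (X j t)).comp t this)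
  have key : ∑ j ∈ Finset.Icc 1 N, 2 * X j t * ksRHS N χ (fun k => X k t) j
      = 2 * (((N : ℝ) - 1) * (1 - χ * hN N * N)) := by
    have := sum_mul_ksRHS N hN2 χ (fun k => X k t)
      (fun i h1 h2 => hKS.ordered t ht i h1 h2)
    calc ∑ j ∈ Finset.Icc 1 N, 2 * X j t * ksRHS N χ (fun k => X k t) j
        = 2 * ∑ j ∈ Finset.Icc 1 N, (fun k => X k t) j * ksRHS N χ (fun k => X k t) j := by
          rw [Finset.mul_sum]; apply Finset.sum_congr rfl; intro j _; ring
      _ = 2 * (((N : ℝ) - 1) * (1 - χ * hN N * N)) := by rw [this]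
  rw [key] at h
  exact h

/-- linear decay of the second moment -/
lemma secondMoment_eq (N : ℕ) (hN2 : 2 ≤ N) (χ T : ℝ) (X : ℕ → ℝ → ℝ)
    (hKS : IsKSSol N χ T X) {t : ℝ} (ht : t ∈ Set.Ico (0:ℝ) T) :
    ∑ j ∈ Finset.Icc 1 N, X j t ^ 2
      = ∑ j ∈ Finset.Icc 1 N, X j 0 ^ 2
        - 2 * (((N : ℝ) - 1) * (χ * hN N * N - 1)) * t := by
  set c : ℝ := 2 * (((N : ℝ) - 1) * (χ * hN N * N - 1)) with hc
  have hT0 : (0:ℝ) ∈ Set.Ico (0:ℝ) T := ⟨le_refl 0, lt_of_le_of_lt ht.1 ht.2⟩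
  have hderiv : ∀ s ∈ Set.Ico (0:ℝ) T,
      HasDerivWithinAt (fun u => (∑ j ∈ Finset.Icc 1 N, X j u ^ 2) + c * u)
        0 (Set.Ico (0:ℝ) T) s := by
    intro s hs
    have h1 := (hasDerivAt_secondMoment N hN2 χ T X hKS hs)
    have h2 : HasDerivAt (fun u => c * u) c s := by
      simpa using (hasDerivAt_id s).const_mul c
    have := h1.add h2
    have hz : 2 * (((N : ℝ) - 1) * (1 - χ * hN N * N)) + c = 0 := by rw [hc]; ring
    rw [hz] at this
    exact this.hasDerivWithinAt
  have hconv : Convex ℝ (Set.Ico (0:ℝ) T) := convex_Ico 0 T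
  have key := hconv.norm_image_sub_le_of_norm_hasDerivWithin_le (C := 0) (f' := fun _ => (0:ℝ))
    hderiv (fun s _ => by norm_num) hT0 ht
  simp only [zero_mul, norm_le_zero_iff, sub_eq_zero] at key
  have key2 : (∑ j ∈ Finset.Icc 1 N, X j t ^ 2) + c * t
      = (∑ j ∈ Finset.Icc 1 N, X j 0 ^ 2) + c * 0 := key
  linarith [key2]

lemma chi_term_pos (N : ℕ) (hN2 : 2 ≤ N) {χ : ℝ} (hχ : 1 + 1 / (N : ℝ) < χ) :
    1 < χ * hN N * N := by
  have hNpos : (0:ℝ) < N := by positivity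
  have hN1pos : (0:ℝ) < (N:ℝ) + 1 := by positivity
  rw [hN, show χ * (1/((N:ℝ)+1)) * N = χ * N / (N+1) by ring, lt_div_iff₀ hN1pos]
  have h1 : (1 + 1/(N:ℝ)) * N = N + 1 := by field_simp
  nlinarith [mul_lt_mul_of_pos_right hχ hNpos]

lemma cpos (N : ℕ) (hN2 : 2 ≤ N) {χ : ℝ} (hχ : 1 + 1 / (N : ℝ) < χ) :
    0 < 2 * (((N : ℝ) - 1) * (χ * hN N * N - 1)) := by
  have h1 : (1:ℝ) < χ * hN N * N := chi_term_pos N hN2 hχ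
  have h2 : (0:ℝ) < (N:ℝ) - 1 := by
    have : (2:ℝ) ≤ N := by exact_mod_cast hN2
    linarith
  nlinarith

lemma part_i (N : ℕ) (hN2 : 2 ≤ N) (χ T : ℝ) (hχ : 1 + 1 / (N : ℝ) < χ)
    (X : ℕ → ℝ → ℝ) (hKS : IsKSSol N χ T X) :
    ∀ i ∈ Finset.Icc 1 N, ∀ t ∈ Set.Ico (0 : ℝ) T,
      |X i t| ≤ Real.sqrt (∑ j ∈ Finset.Icc 1 N, (X j 0) ^ 2) := by
  intro i hi t ht
  have hsq : X i t ^ 2 ≤ ∑ j ∈ Finset.Icc 1 N, X j t ^ 2 :=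
    Finset.single_le_sum (fun j _ => sq_nonneg (X j t)) hi
  have hY : ∑ j ∈ Finset.Icc 1 N, X j t ^ 2 ≤ ∑ j ∈ Finset.Icc 1 N, X j 0 ^ 2 := by
    rw [secondMoment_eq N hN2 χ T X hKS ht]
    have := cpos N hN2 hχ
    nlinarith [ht.1]
  rw [← Real.sqrt_sq_eq_abs]
  exact Real.sqrt_le_sqrt (le_trans hsq hY)

lemma part_ii (N : ℕ) (hN2 : 2 ≤ N) (χ T : ℝ) (hχ : 1 + 1 / (N : ℝ) < χ) (hT : 0 < T)
    (X : ℕ → ℝ → ℝ) (hKS : IsKSSol N χ T X) :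
    T ≤ (∑ j ∈ Finset.Icc 1 N, (X j 0) ^ 2) /
        (2 * ((N : ℝ) - 1) * (χ * hN N * N - 1)) := by
  set Y0 := ∑ j ∈ Finset.Icc 1 N, (X j 0) ^ 2 with hY0
  set c := 2 * (((N : ℝ) - 1) * (χ * hN N * N - 1)) with hc
  have hcpos : 0 < c := cpos N hN2 hχ
  have hY0nn : 0 ≤ Y0 := Finset.sum_nonneg (fun j _ => sq_nonneg _)
  have hbd : ∀ t ∈ Set.Ico (0:ℝ) T, t ≤ Y0 / c := by
    intro t ht
    have hnn : 0 ≤ ∑ j ∈ Finset.Icc 1 N, X j t ^ 2 :=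
      Finset.sum_nonneg (fun j _ => sq_nonneg _)
    rw [secondMoment_eq N hN2 χ T X hKS ht, ← hc, ← hY0] at hnn
    rw [le_div_iff₀ hcpos]
    linarith
  have : 2 * ((N : ℝ) - 1) * (χ * hN N * N - 1) = c := by rw [hc]; ring
  rw [this]
  by_contra h
  push_neg at h
  have h1 : Y0 / c < T := h
  have h2 : (0:ℝ) ≤ Y0 / c := div_nonneg hY0nn hcpos.le
  have ht : (Y0/c + T)/2 ∈ Set.Ico (0:ℝ) T := ⟨by linarith, by linarith⟩
  have := hbd _ ht
  linarith

/-- clamped reciprocal -/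
def psi (η a : ℝ) : ℝ := 1 / max a η

lemma psi_eq {η a : ℝ} (h : η ≤ a) : psi η a = 1 / a := by
  rw [psi, max_eq_left h]

lemma psi_pos {η a : ℝ} (hη : 0 < η) : 0 < psi η a :=
  div_pos one_pos (lt_of_lt_of_le hη (le_max_right a η))

lemma abs_psi_le {η a : ℝ} (hη : 0 < η) : |psi η a| ≤ 1 / η := by
  rw [abs_of_pos (psi_pos hη)]
  exact one_div_le_one_div_of_le hη (le_max_right a η)

lemma psi_lip {η a b : ℝ} (hη : 0 < η) : |psi η a - psi η b| ≤ |a - b| / η ^ 2 := by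
  set A := max a η with hA
  set B := max b η with hB
  have hAη : η ≤ A := le_max_right a η
  have hBη : η ≤ B := le_max_right b η
  have hApos : 0 < A := lt_of_lt_of_le hη hAη
  have hBpos : 0 < B := lt_of_lt_of_le hη hBη
  have heq : psi η a - psi η b = (B - A) / (A * B) := by
    rw [psi, psi, ← hA, ← hB]
    field_simp
  rw [heq, abs_div, abs_of_pos (mul_pos hApos hBpos)]
  have h1 : |B - A| ≤ |a - b| := by
    rw [hB, hA, abs_sub_comm a b]
    exact abs_max_sub_max_le_abs b a η
  have h2 : η ^ 2 ≤ A * B := by nlinarith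
  exact div_le_div₀ (abs_nonneg _) h1 (by positivity) h2

/-- the clamped Keller–Segel field -/
def clampF (N : ℕ) (χ η : ℝ) (x : ℕ → ℝ) (i : ℕ) : ℝ :=
  (if i < N then -(psi η (x (i + 1) - x i)) else 0)
    + (if 1 < i then psi η (x i - x (i - 1)) else 0)
    + 2 * χ * hN N * ∑ j ∈ (Finset.Icc 1 N).erase i,
        (if i < j then psi η (x j - x i) else -(psi η (x i - x j)))


lemma clampF_eq_ksRHS (N : ℕ) (χ : ℝ) {η : ℝ} (hη : 0 < η) (x : ℕ → ℝ)
    (hgap : ∀ i, 1 ≤ i → i < N → η ≤ x (i + 1) - x i) :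
    ∀ i ∈ Finset.Icc 1 N, clampF N χ η x i = ksRHS N χ x i := by
  have hchain : ∀ i j, 1 ≤ i → i < j → j ≤ N → η ≤ x j - x i := by
    intro i j hi hij hj
    induction j with
    | zero => omega
    | succ k ih =>
      rcases Nat.lt_or_ge i k with hik | hik
      · have h1 := ih (by omega) (by omega)
        have h2 := hgap k (by omega) (by omega)
        linarith
      · have : i = k := by omega
        subst this
        exact hgap i hi (by omega)
  intro i hi
  simp only [Finset.mem_Icc] at hi
  unfold clampF ksRHS
  congr 1
  · congr 1
    · split_ifs with h1
      · rw [psi_eq (hchain i (i+1) hi.1 (by omega) (by omega))]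
      · rfl
    · split_ifs with h1
      · rw [psi_eq (hchain (i-1) i (by omega) (by omega) hi.2)]
      · rfl
  · congr 1
    apply Finset.sum_congr rfl
    intro j hj
    rw [Finset.mem_erase, Finset.mem_Icc] at hj
    split_ifs with h1
    · rw [psi_eq (hchain i j hi.1 h1 hj.2.2)]
    · have hji : j < i := by omega
      rw [psi_eq (hchain j i hj.2.1 hji hi.2)]
      rw [show x j - x i = -(x i - x j) by ring, div_neg]

lemma clampF_congr (N : ℕ) (χ η : ℝ) {x y : ℕ → ℝ}
    (h : ∀ j ∈ Finset.Icc 1 N, x j = y j) {i : ℕ} (hi : i ∈ Finset.Icc 1 N) :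
    clampF N χ η x i = clampF N χ η y i := by
  simp only [Finset.mem_Icc] at hi h
  unfold clampF
  congr 1
  · congr 1
    · split_ifs with h1
      · rw [h (i+1) ⟨by omega, by omega⟩, h i ⟨hi.1, hi.2⟩]
      · rfl
    · split_ifs with h1
      · rw [h (i-1) ⟨by omega, by omega⟩, h i ⟨hi.1, hi.2⟩]
      · rfl
  · congr 1
    apply Finset.sum_congr rfl
    intro j hj
    rw [Finset.mem_erase, Finset.mem_Icc] at hj
    rw [h j ⟨hj.2.1, hj.2.2⟩, h i ⟨hi.1, hi.2⟩]

lemma hN_nonneg (N : ℕ) : 0 ≤ hN N := by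
  rw [hN]; positivity

lemma clampF_bound (N : ℕ) (χ : ℝ) {η : ℝ} (hη : 0 < η) (x : ℕ → ℝ) (i : ℕ) :
    |clampF N χ η x i| ≤ (2 + 2 * |χ| * hN N * N) / η := by
  unfold clampF
  have hb1 : |(if i < N then -(psi η (x (i + 1) - x i)) else 0)| ≤ 1/η := by
    split_ifs
    · rw [abs_neg]; exact abs_psi_le hη
    · simp; positivity
  have hb2 : |(if 1 < i then psi η (x i - x (i - 1)) else 0)| ≤ 1/η := by
    split_ifs
    · exact abs_psi_le hη
    · simp; positivity
  have hb3 : |∑ j ∈ (Finset.Icc 1 N).erase i,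
      (if i < j then psi η (x j - x i) else -(psi η (x i - x j)))| ≤ N / η := by
    calc |∑ j ∈ (Finset.Icc 1 N).erase i,
        (if i < j then psi η (x j - x i) else -(psi η (x i - x j)))|
        ≤ ∑ j ∈ (Finset.Icc 1 N).erase i,
          |(if i < j then psi η (x j - x i) else -(psi η (x i - x j)))| :=
          Finset.abs_sum_le_sum_abs _ _
      _ ≤ ∑ j ∈ (Finset.Icc 1 N).erase i, 1/η := by
          apply Finset.sum_le_sum
          intro j _
          split_ifs
          · exact abs_psi_le hη
          · rw [abs_neg]; exact abs_psi_le hη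
      _ = ((Finset.Icc 1 N).erase i).card * (1/η) := by rw [Finset.sum_const, nsmul_eq_mul]
      _ ≤ N / η := by
          have hcard : ((Finset.Icc 1 N).erase i).card ≤ N := by
            calc ((Finset.Icc 1 N).erase i).card ≤ (Finset.Icc 1 N).card :=
                Finset.card_le_card (Finset.erase_subset _ _)
              _ = N := by rw [Nat.card_Icc]; omega
          have : ((((Finset.Icc 1 N).erase i).card : ℝ)) ≤ (N:ℝ) := by exact_mod_cast hcard
          rw [div_eq_mul_one_div (N:ℝ)]
          apply mul_le_mul_of_nonneg_right this (by positivity)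
  calc |(if i < N then -(psi η (x (i + 1) - x i)) else 0)
      + (if 1 < i then psi η (x i - x (i - 1)) else 0)
      + 2 * χ * hN N * ∑ j ∈ (Finset.Icc 1 N).erase i,
          (if i < j then psi η (x j - x i) else -(psi η (x i - x j)))|
      ≤ |(if i < N then -(psi η (x (i + 1) - x i)) else 0)|
        + |(if 1 < i then psi η (x i - x (i - 1)) else 0)|
        + |2 * χ * hN N| * |∑ j ∈ (Finset.Icc 1 N).erase i,
            (if i < j then psi η (x j - x i) else -(psi η (x i - x j)))| := by
        rw [← abs_mul]
        exact (abs_add_le _ _).trans (add_le_add_left (abs_add_le _ _) _)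
    _ ≤ 1/η + 1/η + (2 * |χ| * hN N) * (N / η) := by
        apply add_le_add (add_le_add hb1 hb2)
        apply mul_le_mul _ hb3 (abs_nonneg _)
          (mul_nonneg (mul_nonneg (by norm_num) (abs_nonneg χ)) (hN_nonneg N))
        rw [abs_mul, abs_mul, abs_of_nonneg (hN_nonneg N)]
        norm_num
    _ = (2 + 2 * |χ| * hN N * N) / η := by field_simp; ring

lemma clampF_lip (N : ℕ) (χ : ℝ) {η : ℝ} (hη : 0 < η) {x y : ℕ → ℝ} {d : ℝ} (hd : 0 ≤ d)
    (h : ∀ j ∈ Finset.Icc 1 N, |x j - y j| ≤ d) {i : ℕ} (hi : i ∈ Finset.Icc 1 N) :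
    |clampF N χ η x i - clampF N χ η y i| ≤ (2 + 2 * |χ| * hN N * N) * (2 * d / η ^ 2) := by
  simp only [Finset.mem_Icc] at hi
  have hkey : ∀ a b, a ∈ Finset.Icc 1 N → b ∈ Finset.Icc 1 N →
      |psi η (x a - x b) - psi η (y a - y b)| ≤ 2 * d / η ^ 2 := by
    intro a b ha hb
    calc |psi η (x a - x b) - psi η (y a - y b)|
        ≤ |(x a - x b) - (y a - y b)| / η ^ 2 := psi_lip hη
      _ ≤ (2 * d) / η ^ 2 := by
          apply div_le_div_of_nonneg_right ?_ (by positivity) |>.trans_eq rfl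
          calc |(x a - x b) - (y a - y b)| = |(x a - y a) - (x b - y b)| := by ring_nf
            _ ≤ |x a - y a| + |x b - y b| := abs_sub _ _
            _ ≤ d + d := add_le_add (h a ha) (h b hb)
            _ = 2 * d := by ring
  have hmem : ∀ a, 1 ≤ a → a ≤ N → a ∈ Finset.Icc 1 N := by
    intro a h1 h2; rw [Finset.mem_Icc]; exact ⟨h1, h2⟩
  have hb1 : |(if i < N then -(psi η (x (i + 1) - x i)) else 0)
      - (if i < N then -(psi η (y (i + 1) - y i)) else 0)| ≤ 2 * d / η ^ 2 := by
    split_ifs with h1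
    · rw [show -(psi η (x (i + 1) - x i)) - -(psi η (y (i + 1) - y i))
        = -((psi η (x (i + 1) - x i)) - (psi η (y (i + 1) - y i))) by ring, abs_neg]
      exact hkey (i+1) i (hmem _ (by omega) (by omega)) (hmem _ hi.1 hi.2)
    · simp; positivity
  have hb2 : |(if 1 < i then psi η (x i - x (i - 1)) else 0)
      - (if 1 < i then psi η (y i - y (i - 1)) else 0)| ≤ 2 * d / η ^ 2 := by
    split_ifs with h1
    · exact hkey i (i-1) (hmem _ hi.1 hi.2) (hmem _ (by omega) (by omega))
    · simp; positivity
  have hb3 : |(∑ j ∈ (Finset.Icc 1 N).erase i,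
        (if i < j then psi η (x j - x i) else -(psi η (x i - x j))))
      - ∑ j ∈ (Finset.Icc 1 N).erase i,
        (if i < j then psi η (y j - y i) else -(psi η (y i - y j)))|
      ≤ N * (2 * d / η ^ 2) := by
    rw [← Finset.sum_sub_distrib]
    calc |∑ j ∈ (Finset.Icc 1 N).erase i,
        ((if i < j then psi η (x j - x i) else -(psi η (x i - x j)))
          - (if i < j then psi η (y j - y i) else -(psi η (y i - y j))))|
        ≤ ∑ j ∈ (Finset.Icc 1 N).erase i,
          |(if i < j then psi η (x j - x i) else -(psi η (x i - x j)))
            - (if i < j then psi η (y j - y i) else -(psi η (y i - y j)))| :=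
          Finset.abs_sum_le_sum_abs _ _
      _ ≤ ∑ j ∈ (Finset.Icc 1 N).erase i, (2 * d / η ^ 2) := by
          apply Finset.sum_le_sum
          intro j hj
          rw [Finset.mem_erase, Finset.mem_Icc] at hj
          split_ifs with h1
          · exact hkey j i (hmem _ hj.2.1 hj.2.2) (hmem _ hi.1 hi.2)
          · rw [show -(psi η (x i - x j)) - -(psi η (y i - y j))
              = -((psi η (x i - x j)) - (psi η (y i - y j))) by ring, abs_neg]
            exact hkey i j (hmem _ hi.1 hi.2) (hmem _ hj.2.1 hj.2.2)
      _ = ((Finset.Icc 1 N).erase i).card * (2 * d / η ^ 2) := by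
          rw [Finset.sum_const, nsmul_eq_mul]
      _ ≤ N * (2 * d / η ^ 2) := by
          have hcard : ((Finset.Icc 1 N).erase i).card ≤ N := by
            calc ((Finset.Icc 1 N).erase i).card ≤ (Finset.Icc 1 N).card :=
                Finset.card_le_card (Finset.erase_subset _ _)
              _ = N := by rw [Nat.card_Icc]; omega
          have h' : ((((Finset.Icc 1 N).erase i).card : ℝ)) ≤ (N:ℝ) := by exact_mod_cast hcard
          apply mul_le_mul_of_nonneg_right h' (by positivity)
  calc |clampF N χ η x i - clampF N χ η y i|
      = |((if i < N then -(psi η (x (i + 1) - x i)) else 0)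
          - (if i < N then -(psi η (y (i + 1) - y i)) else 0))
        + ((if 1 < i then psi η (x i - x (i - 1)) else 0)
          - (if 1 < i then psi η (y i - y (i - 1)) else 0))
        + (2 * χ * hN N * ((∑ j ∈ (Finset.Icc 1 N).erase i,
            (if i < j then psi η (x j - x i) else -(psi η (x i - x j))))
          - ∑ j ∈ (Finset.Icc 1 N).erase i,
            (if i < j then psi η (y j - y i) else -(psi η (y i - y j)))))| := by
        unfold clampF; congr 1; ring
    _ ≤ |(if i < N then -(psi η (x (i + 1) - x i)) else 0)
          - (if i < N then -(psi η (y (i + 1) - y i)) else 0)|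
        + |(if 1 < i then psi η (x i - x (i - 1)) else 0)
          - (if 1 < i then psi η (y i - y (i - 1)) else 0)|
        + |2 * χ * hN N| * |(∑ j ∈ (Finset.Icc 1 N).erase i,
            (if i < j then psi η (x j - x i) else -(psi η (x i - x j))))
          - ∑ j ∈ (Finset.Icc 1 N).erase i,
            (if i < j then psi η (y j - y i) else -(psi η (y i - y j)))| := by
        rw [← abs_mul]
        exact (abs_add_le _ _).trans (add_le_add_left (abs_add_le _ _) _)
    _ ≤ 2 * d / η ^ 2 + 2 * d / η ^ 2 + (2 * |χ| * hN N) * (N * (2 * d / η ^ 2)) := by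
        apply add_le_add (add_le_add hb1 hb2)
        apply mul_le_mul _ hb3 (abs_nonneg _)
          (mul_nonneg (mul_nonneg (by norm_num) (abs_nonneg χ)) (hN_nonneg N))
        rw [abs_mul, abs_mul, abs_of_nonneg (hN_nonneg N)]
        norm_num
    _ = (2 + 2 * |χ| * hN N * N) * (2 * d / η ^ 2) := by ring

def toConf (N : ℕ) (y : Fin N → ℝ) : ℕ → ℝ :=
  fun n => if h : 1 ≤ n ∧ n ≤ N then y ⟨n - 1, by omega⟩ else 0

lemma toConf_apply (N : ℕ) (y : Fin N → ℝ) {n : ℕ} (h1 : 1 ≤ n) (h2 : n ≤ N) :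
    toConf N y n = y ⟨n - 1, by omega⟩ := by
  rw [toConf, dif_pos ⟨h1, h2⟩]

def fieldG (N : ℕ) (χ η : ℝ) (y : Fin N → ℝ) : Fin N → ℝ :=
  fun k => clampF N χ η (toConf N y) (k.val + 1)

lemma const_nonneg (N : ℕ) (χ : ℝ) : (0:ℝ) ≤ 2 + 2 * |χ| * hN N * N :=
  add_nonneg (by norm_num)
    (mul_nonneg (mul_nonneg (mul_nonneg (by norm_num) (abs_nonneg χ)) (hN_nonneg N))
      (Nat.cast_nonneg N))

lemma fieldG_norm_le (N : ℕ) (χ : ℝ) {η : ℝ} (hη : 0 < η) (y : Fin N → ℝ) :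
    ‖fieldG N χ η y‖ ≤ (2 + 2 * |χ| * hN N * N) / η := by
  have hCnn : 0 ≤ (2 + 2 * |χ| * hN N * N) / η :=
    div_nonneg (const_nonneg N χ) hη.le
  rw [pi_norm_le_iff_of_nonneg hCnn]
  intro k
  rw [Real.norm_eq_abs]
  exact clampF_bound N χ hη _ _

lemma fieldG_lip (N : ℕ) (χ : ℝ) {η : ℝ} (hη : 0 < η) :
    LipschitzWith (Real.toNNReal ((2 + 2 * |χ| * hN N * N) * (2 / η ^ 2)))
      (fieldG N χ η) := by
  apply LipschitzWith.of_dist_le_mul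
  intro y y'
  have hKnn : (0:ℝ) ≤ (2 + 2 * |χ| * hN N * N) * (2 / η ^ 2) :=
    mul_nonneg (const_nonneg N χ) (by positivity)
  rw [Real.coe_toNNReal _ hKnn]
  rw [dist_pi_le_iff (mul_nonneg hKnn dist_nonneg)]
  intro k
  rw [Real.dist_eq]
  have harg : ∀ j ∈ Finset.Icc 1 N, |toConf N y j - toConf N y' j| ≤ dist y y' := by
    intro j hj
    rw [Finset.mem_Icc] at hj
    rw [toConf_apply N y hj.1 hj.2, toConf_apply N y' hj.1 hj.2, ← Real.dist_eq]
    exact dist_le_pi_dist y y' _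
  have hk : k.val + 1 ∈ Finset.Icc 1 N := by
    rw [Finset.mem_Icc]; exact ⟨by omega, by omega⟩
  calc |clampF N χ η (toConf N y) (k.val + 1) - clampF N χ η (toConf N y') (k.val + 1)|
      ≤ (2 + 2 * |χ| * hN N * N) * (2 * dist y y' / η ^ 2) :=
        clampF_lip N χ hη dist_nonneg harg hk
    _ = (2 + 2 * |χ| * hN N * N) * (2 / η ^ 2) * dist y y' := by ring

/-- The extension lemma: if the gaps stay uniformly bounded below near `T`,
then the solution extends beyond `T`. -/
lemma extension_lemma (N : ℕ) (hN2 : 2 ≤ N) (χ T : ℝ) (X : ℕ → ℝ → ℝ)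
    (hKS : IsKSSol N χ T X) {ε t₁ : ℝ} (hε : 0 < ε) (ht₁ : t₁ ∈ Set.Ico (0:ℝ) T)
    (hgap : ∀ t ∈ Set.Ico t₁ T, ∀ i, 1 ≤ i → i < N → ε ≤ X (i + 1) t - X i t) :
    ∃ T' > T, ∃ X' : ℕ → ℝ → ℝ,
      (∀ i ∈ Finset.Icc 1 N, ∀ t ∈ Set.Ico (0 : ℝ) T, X' i t = X i t) ∧
        IsKSSol N χ T' X' := by
  set η : ℝ := ε / 2 with hη_def
  have hη : 0 < η := by rw [hη_def]; linarith
  set C : ℝ := (2 + 2 * |χ| * hN N * N) / η with hC_def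
  have hCpos : 0 < C := by
    rw [hC_def]
    apply div_pos _ hη
    have := const_nonneg N χ
    nlinarith [mul_nonneg (mul_nonneg (mul_nonneg (by norm_num : (0:ℝ) ≤ 2) (abs_nonneg χ)) (hN_nonneg N)) (Nat.cast_nonneg (α := ℝ) N)]
  set δ : ℝ := ε / (8 * C) with hδ_def
  have hδ : 0 < δ := by rw [hδ_def]; positivity
  have hCδ : C * δ = ε / 8 := by
    rw [hδ_def]; field_simp
  set t₀ : ℝ := max t₁ (T - δ / 2) with ht₀_def
  have ht₀T : t₀ < T := by
    rw [ht₀_def, max_lt_iff]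
    exact ⟨ht₁.2, by linarith⟩
  have ht₀1 : t₁ ≤ t₀ := le_max_left _ _
  have ht₀0 : 0 ≤ t₀ := le_trans ht₁.1 ht₀1
  have hTδ : T < t₀ + δ := by
    have : T - δ / 2 ≤ t₀ := le_max_right _ _
    linarith
  set x₀ : Fin N → ℝ := fun k => X (k.val + 1) t₀ with hx₀_def
  set K : NNReal := Real.toNNReal ((2 + 2 * |χ| * hN N * N) * (2 / η ^ 2)) with hK_def
  -- Picard–Lindelöf
  have hPL : IsPicardLindelof (fun _ : ℝ => fieldG N χ η) (tmin := t₀) (tmax := t₀ + δ)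
      ⟨t₀, ⟨le_refl _, by linarith⟩⟩ x₀ (Real.toNNReal (ε/8)) 0 (Real.toNNReal C) K := by
    constructor
    · intro t _
      exact (fieldG_lip N χ hη).lipschitzOnWith
    · intro x _
      exact continuousOn_const
    · intro t _ x _
      rw [Real.coe_toNNReal _ hCpos.le]
      exact fieldG_norm_le N χ hη x
    · have : max ((t₀ + δ) - t₀) (t₀ - t₀) = δ := by
        rw [show (t₀ + δ) - t₀ = δ by ring, show t₀ - t₀ = 0 by ring, max_eq_left hδ.le]
      show (Real.toNNReal C : ℝ) * max ((t₀ + δ) - t₀) (t₀ - t₀)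
        ≤ (Real.toNNReal (ε/8) : ℝ) - ((0 : NNReal) : ℝ)
      rw [Real.coe_toNNReal _ hCpos.le, Real.coe_toNNReal _ (by positivity), NNReal.coe_zero,
        sub_zero, this, hCδ]
  obtain ⟨f, hf0', hf⟩ := hPL.exists_eq_forall_mem_Icc_hasDerivWithinAt₀
  have hf0 : f t₀ = x₀ := hf0'
  -- f stays in the ball
  have hball : ∀ t ∈ Set.Icc t₀ (t₀ + δ), ∀ k, |f t k - x₀ k| ≤ ε / 8 := by
    intro t ht k
    have hmvt := (convex_Icc t₀ (t₀ + δ)).norm_image_sub_le_of_norm_hasDerivWithin_le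
      (f' := fun u => fieldG N χ η (f u)) hf
      (fun u _ => fieldG_norm_le N χ hη (f u)) (Set.left_mem_Icc.mpr (by linarith)) ht
    have h1 : ‖f t - f t₀‖ ≤ C * |t - t₀| := by
      rw [← Real.norm_eq_abs]; exact hmvt
    have h2 : |t - t₀| ≤ δ := by
      rw [abs_of_nonneg (by linarith [ht.1])]
      linarith [ht.2]
    have h3 : ‖f t - f t₀‖ ≤ ε / 8 := by
      calc ‖f t - f t₀‖ ≤ C * |t - t₀| := h1
        _ ≤ C * δ := by nlinarith
        _ = ε / 8 := hCδ
    rw [hf0] at h3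
    have h4 : |f t k - x₀ k| ≤ ‖f t - x₀‖ := by
      have := norm_le_pi_norm (f t - x₀) k
      simpa [Real.norm_eq_abs] using this
    linarith
  -- gaps of f stay bounded below
  have hgapf : ∀ t ∈ Set.Icc t₀ (t₀ + δ), ∀ i, 1 ≤ i → i < N →
      3 * ε / 4 ≤ toConf N (f t) (i + 1) - toConf N (f t) i := by
    intro t ht i h1 h2
    rw [toConf_apply N (f t) (by omega) (by omega), toConf_apply N (f t) h1 (by omega)]
    have e1 : (⟨i + 1 - 1, by omega⟩ : Fin N) = ⟨i, by omega⟩ :=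
      Fin.mk_eq_mk.mpr (by omega)
    rw [e1]
    have hx1 : x₀ ⟨i, by omega⟩ = X (i + 1) t₀ := rfl
    have hx2 : x₀ ⟨i - 1, by omega⟩ = X i t₀ := by
      show X ((⟨i - 1, by omega⟩ : Fin N).val + 1) t₀ = X i t₀
      congr 1
      simp
      omega
    have hg0 : ε ≤ X (i + 1) t₀ - X i t₀ :=
      hgap t₀ ⟨ht₀1, ht₀T⟩ i h1 h2
    have hb1 := hball t ht ⟨i, by omega⟩
    have hb2 := hball t ht ⟨i - 1, by omega⟩
    rw [hx1] at hb1
    rw [hx2] at hb2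
    have := abs_le.mp hb1
    have := abs_le.mp hb2
    rw [abs_le] at hb1 hb2
    linarith [hb1.1, hb1.2, hb2.1, hb2.2]
  -- f satisfies the true ODE (componentwise value identity)
  have hval : ∀ t ∈ Set.Icc t₀ (t₀ + δ), ∀ k : Fin N,
      fieldG N χ η (f t) k = ksRHS N χ (toConf N (f t)) (k.val + 1) := by
    intro t ht k
    have := clampF_eq_ksRHS N χ hη (toConf N (f t))
      (fun i h1 h2 => le_trans (by rw [hη_def]; linarith) (hgapf t ht i h1 h2))
      (k.val + 1) (by rw [Finset.mem_Icc]; omega)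
    exact this
  -- the solution X as a curve in Fin N → ℝ
  set XE : ℝ → (Fin N → ℝ) := fun t k => X (k.val + 1) t with hXE_def
  have hXEval : ∀ t ∈ Set.Ico t₀ T, ∀ k : Fin N,
      fieldG N χ η (XE t) k = ksRHS N χ (fun j => X j t) (k.val + 1) := by
    intro t ht k
    have hmem : k.val + 1 ∈ Finset.Icc 1 N := by rw [Finset.mem_Icc]; omega
    have hcongr : ∀ j ∈ Finset.Icc 1 N, toConf N (XE t) j = X j t := by
      intro j hj
      rw [Finset.mem_Icc] at hj
      rw [toConf_apply N _ hj.1 hj.2, hXE_def]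
      simp only
      congr 1
      omega
    have e1 : clampF N χ η (toConf N (XE t)) (k.val + 1)
        = clampF N χ η (fun j => X j t) (k.val + 1) :=
      clampF_congr N χ η hcongr hmem
    have e2 : clampF N χ η (fun j => X j t) (k.val + 1)
        = ksRHS N χ (fun j => X j t) (k.val + 1) :=
      clampF_eq_ksRHS N χ hη _
        (fun i h1 h2 => le_trans (by rw [hη_def]; linarith)
          (hgap t ⟨le_trans ht₀1 ht.1, ht.2⟩ i h1 h2)) _ hmem
    rw [show fieldG N χ η (XE t) k = clampF N χ η (toConf N (XE t)) (k.val + 1) from rfl,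
      e1, e2]
  -- uniqueness: XE = f on [t₀, T) ∩ [t₀, t₀ + δ]
  have huniq : ∀ t ∈ Set.Ico t₀ T, XE t = f t := by
    intro t ht
    have hsub : Set.Icc t₀ t ⊆ Set.Ico 0 T :=
      fun u hu => ⟨le_trans ht₀0 hu.1, lt_of_le_of_lt hu.2 ht.2⟩
    have hXEc : ContinuousOn XE (Set.Icc t₀ t) := by
      rw [continuousOn_pi]
      intro k
      intro u hu
      exact ((hKS.ode (k.val + 1) (by rw [Finset.mem_Icc]; omega) u
        (hsub hu)).continuousAt).continuousWithinAt
    have hXEd : ∀ u ∈ Set.Ico t₀ t, HasDerivWithinAt XE (fieldG N χ η (XE u)) (Set.Ici u) u := by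
      intro u hu
      have huT : u ∈ Set.Ico t₀ T := ⟨hu.1, lt_trans hu.2 ht.2⟩
      rw [hasDerivWithinAt_pi]
      intro k
      have := hKS.ode (k.val + 1) (by rw [Finset.mem_Icc]; omega) u (hsub ⟨hu.1, hu.2.le⟩)
      rw [hXEval u huT k]
      exact this.hasDerivWithinAt
    have hfc : ContinuousOn f (Set.Icc t₀ t) := by
      intro u hu
      have hu' : u ∈ Set.Icc t₀ (t₀ + δ) := ⟨hu.1, by linarith [hu.2, ht.2]⟩
      exact ((hf u hu').continuousWithinAt).mono
        (fun v hv => ⟨hv.1, by linarith [hv.2, ht.2]⟩)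
    have hfd : ∀ u ∈ Set.Ico t₀ t, HasDerivWithinAt f (fieldG N χ η (f u)) (Set.Ici u) u := by
      intro u hu
      have hu' : u ∈ Set.Icc t₀ (t₀ + δ) := ⟨hu.1, by linarith [hu.2.le, ht.2]⟩
      apply (hf u hu').mono_of_mem_nhdsWithin
      rw [mem_nhdsWithin]
      refine ⟨Set.Iio (t₀ + δ), isOpen_Iio, by simp only [Set.mem_Iio]; linarith [hu.2, ht.2, hTδ], ?_⟩
      intro v hv
      exact ⟨le_trans hu.1 hv.2, hv.1.le⟩
    have heq := ODE_solution_unique (v := fun _ : ℝ => fieldG N χ η) (K := K)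
      (fun _ => fieldG_lip N χ hη) hXEc hXEd hfc hfd (by rw [hf0])
    exact heq (Set.right_mem_Icc.mpr ht.1)
  -- the extended solution
  set T' : ℝ := t₀ + δ with hT'_def
  refine ⟨T', hTδ, fun i t => if t < t₀ then X i t else toConf N (f t) i, ?_, ?_⟩
  · -- agreement on [0, T)
    intro i hi t ht
    dsimp only
    by_cases h : t < t₀
    · rw [if_pos h]
    · rw [if_neg h]
      push_neg at h
      rw [← huniq t ⟨h, ht.2⟩]
      rw [Finset.mem_Icc] at hi
      rw [toConf_apply N _ hi.1 hi.2, hXE_def]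
      simp only
      congr 1
      omega
  · -- it is a solution on [0, T')
    have hagree : ∀ i ∈ Finset.Icc 1 N, ∀ t < T,
        (if t < t₀ then X i t else toConf N (f t) i) = X i t := by
      intro i hi t ht
      by_cases h : t < t₀
      · rw [if_pos h]
      · rw [if_neg h]
        push_neg at h
        rw [← huniq t ⟨h, ht⟩]
        rw [Finset.mem_Icc] at hi
        rw [toConf_apply N _ hi.1 hi.2, hXE_def]
        simp only
        congr 1
        omega
    constructor
    · -- ordered
      intro t ht i h1 h2
      by_cases h : t < T
      · rw [hagree i (by rw [Finset.mem_Icc]; omega) t h,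
          hagree (i+1) (by rw [Finset.mem_Icc]; omega) t h]
        exact hKS.ordered t ⟨ht.1, h⟩ i h1 h2
      · push_neg at h
        have ht' : t ∈ Set.Icc t₀ (t₀ + δ) := ⟨by linarith, by linarith [ht.2]⟩
        rw [if_neg (by push_neg; linarith), if_neg (by push_neg; linarith)]
        have := hgapf t ht' i h1 h2
        linarith
    · -- ode
      intro i hi t ht
      by_cases h : t < T
      · -- use that X' agrees with X on a neighborhood
        have hev : (fun u => if u < t₀ then X i u else toConf N (f u) i) =ᶠ[nhds t] X i := by
          filter_upwards [Iio_mem_nhds h] with u hu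
          exact hagree i hi u hu
        have hode := hKS.ode i hi t ⟨ht.1, h⟩
        have hrhs : ksRHS N χ (fun j => if t < t₀ then X j t else toConf N (f t) j) i
            = ksRHS N χ (fun j => X j t) i := by
          apply ksRHS_congr N χ _ hi
          intro j hj
          exact hagree j hj t h
        rw [← hrhs] at hode
        exact hode.congr_of_eventuallyEq hev
      · push_neg at h
        have htlo : t₀ < t := lt_of_lt_of_le ht₀T h
        have hthi : t < t₀ + δ := ht.2
        rw [Finset.mem_Icc] at hi
        have hkval : i - 1 < N := by omega
        have hderiv : HasDerivAt f (fieldG N χ η (f t)) t :=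
          (hf t ⟨by linarith, by linarith⟩).hasDerivAt (Icc_mem_nhds htlo hthi)
        rw [hasDerivAt_pi] at hderiv
        have hcomp := hderiv ⟨i - 1, hkval⟩
        have hev : (fun u => if u < t₀ then X i u else toConf N (f u) i)
            =ᶠ[nhds t] (fun u => f u ⟨i - 1, hkval⟩) := by
          filter_upwards [Ioi_mem_nhds htlo] with u hu
          rw [if_neg (by push_neg; exact le_of_lt hu), toConf_apply N _ hi.1 hi.2]
        have e1 : (⟨i - 1, hkval⟩ : Fin N).val + 1 = i := by simp; omega
        have hval' : fieldG N χ η (f t) ⟨i - 1, hkval⟩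
            = ksRHS N χ (fun j => if t < t₀ then X j t else toConf N (f t) j) i := by
          have e0 := hval t ⟨by linarith, by linarith⟩ ⟨i - 1, hkval⟩
          have e2 : ksRHS N χ (toConf N (f t)) ((⟨i - 1, hkval⟩ : Fin N).val + 1)
              = ksRHS N χ (toConf N (f t)) i := by rw [e1]
          rw [e0, e2]
          apply ksRHS_congr N χ _ (by rw [Finset.mem_Icc]; exact ⟨hi.1, hi.2⟩)
          intro j _
          rw [if_neg (by push_neg; linarith)]
        have hfinal := hcomp.congr_of_eventuallyEq hev
        rw [hval'] at hfinal
        exact hfinal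
lemma exists_weak_blowup (N : ℕ) (X : ℕ → ℝ → ℝ) (T : ℝ)
    {i : ℕ} (h1 : 1 ≤ i) (h2 : i < N) (h3 : gapLiminfZero X T i) :
    ∃ I : Finset ℕ, IsWeakBlowup N X T I := by
  classical
  set I₀ : Finset ℕ := Finset.Icc i (i+1) with hI₀_def
  have hI₀cand : IsWeakCand N X T I₀ := by
    refine ⟨⟨i, by rw [hI₀_def, Finset.mem_Icc]; omega⟩, ⟨i, i+1, h1, by omega, rfl⟩, ?_⟩
    intro j hj hj1
    rw [hI₀_def, Finset.mem_Icc] at hj hj1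
    have : j = i := by omega
    subst this
    exact h3
  have hsub_univ : ∀ J, IsWeakCand N X T J → J ⊆ Finset.Icc 1 N := by
    rintro J ⟨-, ⟨a, b, ha, hb, rfl⟩, -⟩
    exact Finset.Icc_subset_Icc ha hb
  set S : Finset (Finset ℕ) :=
    (Finset.Icc 1 N).powerset.filter (fun J => IsWeakCand N X T J ∧ I₀ ⊆ J) with hS_def
  have hI₀S : I₀ ∈ S := by
    rw [hS_def, Finset.mem_filter, Finset.mem_powerset]
    exact ⟨hsub_univ I₀ hI₀cand, hI₀cand, Finset.Subset.refl I₀⟩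
  obtain ⟨I, hIS, hImax⟩ := Finset.exists_max_image S (fun J => J.card) ⟨I₀, hI₀S⟩
  rw [hS_def, Finset.mem_filter] at hIS
  refine ⟨I, hIS.2.1, ?_⟩
  intro J hJ hIJ
  have hJS : J ∈ S := by
    rw [hS_def, Finset.mem_filter, Finset.mem_powerset]
    exact ⟨hsub_univ J hJ, hJ, Finset.Subset.trans hIS.2.2 hIJ⟩
  exact (Finset.eq_of_subset_of_card_le hIJ (hImax J hJS)).symm

lemma part_iii (N : ℕ) (hN2 : 2 ≤ N) (χ T : ℝ) (hχ : 1 + 1 / (N : ℝ) < χ) (hT : 0 < T)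
    (X : ℕ → ℝ → ℝ) (hX : IsMaxKSSol N χ T X) :
    ∃ i, 1 ≤ i ∧ i < N ∧ gapLiminfZero X T i := by
  by_contra hcon
  push_neg at hcon
  set l := nhdsWithin T (Set.Iio T) with hl_def
  haveI hlne : l.NeBot := by rw [hl_def]; infer_instance
  have hev_mem : ∀ᶠ t in l, t ∈ Set.Ico (0:ℝ) T := by
    have h0 : Set.Ioo (0:ℝ) T ∈ l := by
      rw [hl_def]; exact Ioo_mem_nhdsLT hT
    filter_upwards [h0] with t ht
    exact ⟨ht.1.le, ht.2⟩
  set R := Real.sqrt (∑ j ∈ Finset.Icc 1 N, X j 0 ^ 2) with hR_def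
  have key : ∀ i, 1 ≤ i → i < N → ∃ c, 0 < c ∧ ∀ᶠ t in l, c ≤ X (i+1) t - X i t := by
    intro i h1 h2
    set g := fun t => X (i+1) t - X i t with hg_def
    have hub : ∀ᶠ t in l, g t ≤ 2 * R := by
      filter_upwards [hev_mem] with t ht
      have hb1 := part_i N hN2 χ T hχ X hX.1 (i+1) (by rw [Finset.mem_Icc]; omega) t ht
      have hb2 := part_i N hN2 χ T hχ X hX.1 i (by rw [Finset.mem_Icc]; omega) t ht
      rw [← hR_def] at hb1 hb2
      have := abs_le.mp hb1
      have := abs_le.mp hb2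
      rw [hg_def]
      dsimp only
      linarith [(abs_le.mp hb1).2, (abs_le.mp hb2).1]
    have hlb : ∀ᶠ t in l, 0 ≤ g t := by
      filter_upwards [hev_mem] with t ht
      have := hX.1.ordered t ht i h1 h2
      rw [hg_def]
      dsimp only
      linarith
    have hbdd_above : l.IsBoundedUnder (· ≤ ·) g := ⟨2*R, Filter.eventually_map.mpr hub⟩
    have hbdd_below : l.IsBoundedUnder (· ≥ ·) g := ⟨0, Filter.eventually_map.mpr hlb⟩
    have hge : 0 ≤ Filter.liminf g l :=
      Filter.le_liminf_of_le hbdd_above.isCoboundedUnder_ge hlb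
    have hne : Filter.liminf g l ≠ 0 := by
      intro h0
      exact hcon i h1 h2 h0
    have hpos : 0 < Filter.liminf g l := lt_of_le_of_ne hge (Ne.symm hne)
    refine ⟨Filter.liminf g l / 2, by linarith, ?_⟩
    have hev := Filter.eventually_lt_of_lt_liminf
      (show Filter.liminf g l / 2 < Filter.liminf g l by linarith) hbdd_below
    filter_upwards [hev] with t ht
    exact ht.le
  choose! c hcpos hcev using key
  have hs_ne : (Finset.Ico 1 N).Nonempty := ⟨1, by rw [Finset.mem_Ico]; omega⟩
  set ε := (Finset.Ico 1 N).inf' hs_ne c with hε_def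
  have hεpos : 0 < ε := by
    rw [hε_def, Finset.lt_inf'_iff]
    intro j hj
    rw [Finset.mem_Ico] at hj
    exact hcpos j hj.1 hj.2
  have hevall : ∀ᶠ t in l, ∀ i ∈ Finset.Ico 1 N, c i ≤ X (i+1) t - X i t := by
    rw [Filter.eventually_all_finset]
    intro i hi
    rw [Finset.mem_Ico] at hi
    exact hcev i hi.1 hi.2
  have hgood : ∀ᶠ t in l, t ∈ Set.Ico (0:ℝ) T ∧
      ∀ i ∈ Finset.Ico 1 N, c i ≤ X (i+1) t - X i t := hev_mem.and hevall
  rw [hl_def] at hgood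
  obtain ⟨a, haT, hsub⟩ := mem_nhdsLT_iff_exists_Ioo_subset.mp hgood
  rw [Set.mem_Iio] at haT
  set t₁ := max ((a+T)/2) (T/2) with ht₁_def
  have ht₁ : t₁ ∈ Set.Ico (0:ℝ) T := by
    constructor
    · apply le_trans (by linarith : (0:ℝ) ≤ T/2) (le_max_right _ _)
    · rw [ht₁_def, max_lt_iff]
      exact ⟨by linarith, by linarith⟩
  have hgap : ∀ t ∈ Set.Ico t₁ T, ∀ i, 1 ≤ i → i < N → ε ≤ X (i + 1) t - X i t := by
    intro t ht i h1 h2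
    have hta : a < t := by
      have : (a+T)/2 ≤ t₁ := le_max_left _ _
      have := ht.1
      linarith
    have htmem : t ∈ Set.Ioo a T := ⟨hta, ht.2⟩
    obtain ⟨-, hc⟩ := hsub htmem
    have hi : i ∈ Finset.Ico 1 N := by rw [Finset.mem_Ico]; exact ⟨h1, h2⟩
    calc ε ≤ c i := Finset.inf'_le c hi
      _ ≤ X (i + 1) t - X i t := hc i hi
  obtain ⟨T', hT', X', hagr, hsol⟩ :=
    extension_lemma N hN2 χ T X hX.1 hεpos ht₁ hgap
  exact hX.2 T' hT' X' hagr hsol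

/-- for `χ > χ_N = 1 + 1/N` and any maximal solution on `[0,T)`:
(i) all particles are bounded by the initial second moment;
(ii) `T ≤ Π²(0)/(2(N-1)(χ h_N N - 1))` (in particular `T` is finite);
(iii) some consecutive gap has liminf zero at `T`; in particular a weak blow-up set exists. -/
theorem stmt2 (N : ℕ) (hN2 : 2 ≤ N) (χ T : ℝ) (hχ : 1 + 1 / (N : ℝ) < χ) (hT : 0 < T)
    (X : ℕ → ℝ → ℝ) (hX : IsMaxKSSol N χ T X) :
    (∀ i ∈ Finset.Icc 1 N, ∀ t ∈ Set.Ico (0 : ℝ) T,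
        |X i t| ≤ Real.sqrt (∑ j ∈ Finset.Icc 1 N, (X j 0) ^ 2)) ∧
      T ≤ (∑ j ∈ Finset.Icc 1 N, (X j 0) ^ 2) /
          (2 * ((N : ℝ) - 1) * (χ * hN N * N - 1)) ∧
      (∃ i, 1 ≤ i ∧ i < N ∧ gapLiminfZero X T i) ∧
      ∃ I : Finset ℕ, IsWeakBlowup N X T I := by
  obtain ⟨i, h1, h2, h3⟩ := part_iii N hN2 χ T hχ hT X hX
  exact ⟨fun i hi t ht => part_i N hN2 χ T hχ X hX.1 i hi t ht,
    part_ii N hN2 χ T hχ hT X hX.1,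
    ⟨i, h1, h2, h3⟩,
    exists_weak_blowup N X T h1 h2 h3⟩
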